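/- (Left-to-right step in the proof of the S-rule lemma.) In every Heyting algebra, for all elements a₁, a₂, h₁, h₂: (a₁ ⇔ h₁)ᶜ ⊓ (a₂ ⇔ h₂)ᶜ ⊓ (a₁ ⇔ a₂) ⊓ (h₁ ⇔ h₂) ⊓ (h₁ ⊔ h₁ᶜ) ⊓ (a₂ ⊔ a₂ᶜ) ≤ a₁ ⊔ h₂. -/

import Mathlib

/-- Left-to-right step in the proof of the S-rule lemma. -/
theorem srule_left_to_right {α : Type*} [HeytingAlgebra α] (a₁ a₂ h₁ h₂ : α) :
    (bihimp a₁ h₁)ᶜ ⊓ (bihimp a₂ h₂)ᶜ ⊓ bihimp a₁ a₂ ⊓ bihimp h₁ h₂ ⊓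
        (h₁ ⊔ h₁ᶜ) ⊓ (a₂ ⊔ a₂ᶜ) ≤ a₁ ⊔ h₂ := by
  set Y := (bihimp a₁ h₁)ᶜ ⊓ (bihimp a₂ h₂)ᶜ ⊓ bihimp a₁ a₂ ⊓ bihimp h₁ h₂ with hY
  have hY1 : Y ≤ (bihimp a₁ h₁)ᶜ := le_trans inf_le_left (le_trans inf_le_left inf_le_left)
  have hY3 : Y ≤ bihimp a₁ a₂ := le_trans inf_le_left inf_le_right
  have hY4 : Y ≤ bihimp h₁ h₂ := inf_le_right
  have hh12 : bihimp h₁ h₂ ≤ h₁ ⇨ h₂ := by rw [bihimp_def]; exact inf_le_right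
  have ha21 : bihimp a₁ a₂ ≤ a₂ ⇨ a₁ := by rw [bihimp_def]; exact inf_le_left
  have ha12 : bihimp a₁ a₂ ≤ a₁ ⇨ a₂ := by rw [bihimp_def]; exact inf_le_right
  simp only [inf_sup_left, inf_sup_right]
  -- four cases
  have c1 : Y ⊓ h₁ ≤ h₂ := by
    calc Y ⊓ h₁ ≤ (h₁ ⇨ h₂) ⊓ h₁ :=
          inf_le_inf_right _ (hY4.trans hh12)
      _ ≤ h₂ := himp_inf_le
  have c3 : Y ⊓ h₁ᶜ ⊓ a₂ ≤ a₁ := by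
    calc Y ⊓ h₁ᶜ ⊓ a₂ ≤ (a₂ ⇨ a₁) ⊓ a₂ :=
          inf_le_inf_right _ (inf_le_left.trans (hY3.trans ha21))
      _ ≤ a₁ := himp_inf_le
  have ha1c : Y ⊓ h₁ᶜ ⊓ a₂ᶜ ≤ a₁ᶜ := by
    rw [← himp_bot a₁, le_himp_iff]
    calc Y ⊓ h₁ᶜ ⊓ a₂ᶜ ⊓ a₁ ≤ a₂ᶜ ⊓ ((a₁ ⇨ a₂) ⊓ a₁) := by
          refine le_inf (inf_le_left.trans inf_le_right) (le_inf ?_ inf_le_right)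
          exact inf_le_left.trans (inf_le_left.trans (inf_le_left.trans (hY3.trans ha12)))
      _ ≤ a₂ᶜ ⊓ a₂ := inf_le_inf_left _ himp_inf_le
      _ ≤ ⊥ := by simp
  have c4 : Y ⊓ h₁ᶜ ⊓ a₂ᶜ ≤ ⊥ := by
    have hbi : Y ⊓ h₁ᶜ ⊓ a₂ᶜ ≤ bihimp a₁ h₁ := by
      refine le_bihimp ?_ ?_ <;> rw [inf_comm]
      swap
      · exact le_trans (inf_le_inf_right _ ha1c) (by simp)
      · refine le_trans (inf_le_inf_right _ (inf_le_left.trans inf_le_right)) (by simp)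
    have hc : Y ⊓ h₁ᶜ ⊓ a₂ᶜ ≤ (bihimp a₁ h₁)ᶜ :=
      inf_le_left.trans (inf_le_left.trans hY1)
    calc Y ⊓ h₁ᶜ ⊓ a₂ᶜ ≤ bihimp a₁ h₁ ⊓ (bihimp a₁ h₁)ᶜ := le_inf hbi hc
      _ ≤ ⊥ := by simp
  refine sup_le (sup_le ?_ ?_) (sup_le ?_ ?_)
  · exact le_sup_right.trans' (inf_le_left.trans c1)
  · exact le_sup_left.trans' c3
  · exact le_sup_right.trans' (inf_le_left.trans c1)
  · exact (c4.trans bot_le : _ ≤ a₁ ⊔ h₂)
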